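/- For all positive integers n and k, F^d_k(n) = G°_k(n) − G°_k(n − k): the total number of parts with first coordinate k over all b-colored distinct partitions of n equals the difference of the numbers of colored parts repeated at least k times in all b-colored odd partitions of n and of n − k. -/

import Mathlib

/-- A colored partition of `n`, where the part `j` comes in `b j` colors, is a multiset of
pairs `(j, c)` with `j` a positive integer and `c ∈ {1, …, b j}`, whose weight (the sum of
the first coordinates, counted with multiplicity) is `n`. -/
def IsColoredPartition (b : ℕ → ℕ) (n : ℕ) (M : Multiset (ℕ × ℕ)) : Prop :=
  (∀ p ∈ M, 0 < p.1 ∧ 1 ≤ p.2 ∧ p.2 ≤ b p.1) ∧ (M.map Prod.fst).sum = n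

/-- A colored partition in which every colored part occurs at most once. -/
def IsColoredDistinctPartition (b : ℕ → ℕ) (n : ℕ) (M : Multiset (ℕ × ℕ)) : Prop :=
  IsColoredPartition b n M ∧ M.Nodup

/-- `h^d n`: the number of `b`-colored partitions of `n` with all colored parts distinct. -/
noncomputable def coloredhDist (b : ℕ → ℕ) (n : ℕ) : ℕ :=
  Nat.card {M // IsColoredDistinctPartition b n M}

/-- `F^d k n`: the total number of parts with first coordinate `k` over all `b`-colored
distinct partitions of `n`. -/
noncomputable def coloredFDist (b : ℕ → ℕ) (k n : ℕ) : ℕ :=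
  ∑ᶠ M ∈ {M | IsColoredDistinctPartition b n M}, (Multiset.filter (fun p => p.1 = k) M).card

/-- A colored partition in which every part has odd first coordinate. -/
def IsColoredOddPartition (b : ℕ → ℕ) (n : ℕ) (M : Multiset (ℕ × ℕ)) : Prop :=
  IsColoredPartition b n M ∧ ∀ p ∈ M, Odd p.1

/-- `G° k n`: the total number of distinct colored parts occurring with multiplicity at
least `k`, summed over all `b`-colored odd partitions of `n`. -/
noncomputable def coloredGOdd (b : ℕ → ℕ) (k n : ℕ) : ℕ :=
  ∑ᶠ M ∈ {M | IsColoredOddPartition b n M},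
    (M.toFinset.filter fun p => k ≤ M.count p).card

open PowerSeries

namespace Theorems100

noncomputable section

variable {α : Type*}

open Finset

open scoped Classical

/-- The partial product for the generating function for odd partitions.
TODO: As `m` tends to infinity, this converges (in the `X`-adic topology).

If `m` is sufficiently large, the `i`th coefficient gives the number of odd partitions of the
natural number `i`: proved in `oddGF_prop`.
It is stated for an arbitrary field `α`, though it usually suffices to use `ℚ` or `ℝ`.
-/
def partialOddGF (m : ℕ) [Field α] :=
  ∏ i ∈ range m, (1 - (X : PowerSeries α) ^ (2 * i + 1))⁻¹

/-- The partial product for the generating function for distinct partitions.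
TODO: As `m` tends to infinity, this converges (in the `X`-adic topology).

If `m` is sufficiently large, the `i`th coefficient gives the number of distinct partitions of the
natural number `i`: proved in `distinctGF_prop`.
It is stated for an arbitrary commutative semiring `α`, though it usually suffices to use `ℕ`, `ℚ`
or `ℝ`.
-/
def partialDistinctGF (m : ℕ) [CommSemiring α] :=
  ∏ i ∈ range m, (1 + (X : PowerSeries α) ^ (i + 1))

open Finset.HasAntidiagonal

universe u
variable {ι : Type u}

/-- A convenience constructor for the power series whose coefficients indicate a subset. -/
def indicatorSeries (α : Type*) [Semiring α] (s : Set ℕ) : PowerSeries α :=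
  PowerSeries.mk fun n => if n ∈ s then 1 else 0

theorem coeff_indicator (s : Set ℕ) [Semiring α] (n : ℕ) :
    coeff n (indicatorSeries α s) = if n ∈ s then 1 else 0 :=
  coeff_mk _ _

theorem coeff_indicator_pos (s : Set ℕ) [Semiring α] (n : ℕ) (h : n ∈ s) :
    coeff n (indicatorSeries α s) = 1 := by rw [coeff_indicator, if_pos h]

theorem coeff_indicator_neg (s : Set ℕ) [Semiring α] (n : ℕ) (h : n ∉ s) :
    coeff n (indicatorSeries α s) = 0 := by rw [coeff_indicator, if_neg h]

theorem constantCoeff_indicator (s : Set ℕ) [Semiring α] :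
    constantCoeff (indicatorSeries α s) = if 0 ∈ s then 1 else 0 :=
  rfl

theorem two_series (i : ℕ) [Semiring α] :
    1 + (X : PowerSeries α) ^ i.succ = indicatorSeries α {0, i.succ} := by
  ext n
  simp only [coeff_indicator, coeff_one, coeff_X_pow, Set.mem_insert_iff, Set.mem_singleton_iff,
    map_add]
  cases' n with d
  · simp [(Nat.succ_ne_zero i).symm, constantCoeff_indicator]
  · simp [Nat.succ_ne_zero d]

theorem num_series' [Field α] (i : ℕ) :
    (1 - (X : PowerSeries α) ^ (i + 1))⁻¹ = indicatorSeries α {k | i + 1 ∣ k} := by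
  rw [PowerSeries.inv_eq_iff_mul_eq_one]
  · ext n
    cases n with
    | zero => simp [mul_sub, zero_pow, constantCoeff_indicator]
    | succ n =>
      simp only [coeff_one, if_false, mul_sub, mul_one, coeff_indicator,
        LinearMap.map_sub, reduceCtorEq]
      simp_rw [coeff_mul, coeff_X_pow, coeff_indicator, @boole_mul _ _ _ _]
      letI : ∀ x : ℕ × ℕ, Decidable (x.1 ∈ {k | i + 1 ∣ k}) := fun _ => Classical.propDecidable _
      erw [sum_ite, sum_ite]
      simp_rw [@filter_filter _ _ _ _ _, sum_const_zero, add_zero, sum_const, nsmul_eq_mul, mul_one,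
        sub_eq_iff_eq_add, zero_add]
      symm
      split_ifs with h
      · suffices #{a ∈ antidiagonal (n + 1) | i + 1 ∣ a.fst ∧ a.snd = i + 1} = 1 by
          simp only [Set.mem_setOf_eq]; convert congr_arg ((↑) : ℕ → α) this; norm_cast
        rw [card_eq_one]
        cases' h with p hp
        refine ⟨((i + 1) * (p - 1), i + 1), ?_⟩
        ext ⟨a₁, a₂⟩
        simp only [mem_filter, Prod.mk_inj, HasAntidiagonal.mem_antidiagonal, mem_singleton]
        constructor
        · rintro ⟨a_left, ⟨a, rfl⟩, rfl⟩
          refine ⟨?_, rfl⟩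
          rw [Nat.mul_sub_left_distrib, ← hp, ← a_left, mul_one, Nat.add_sub_cancel]
        · rintro ⟨rfl, rfl⟩
          match p with
          | 0 => rw [mul_zero] at hp; cases hp
          | p + 1 => rw [hp]; simp [mul_add]
      · suffices #{a ∈ antidiagonal (n + 1) | i + 1 ∣ a.fst ∧ a.snd = i + 1} = 0 by
          simp only [Set.mem_setOf_eq]; convert congr_arg ((↑) : ℕ → α) this; norm_cast
        rw [card_eq_zero]
        apply eq_empty_of_forall_notMem
        simp only [Prod.forall, mem_filter, not_and, HasAntidiagonal.mem_antidiagonal]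
        rintro _ h₁ h₂ ⟨a, rfl⟩ rfl
        apply h
        simp [← h₂]
  · simp [zero_pow]

def mkOdd : ℕ ↪ ℕ :=
  ⟨fun i => 2 * i + 1, fun x y h => by linarith⟩

-- The main workhorse of the partition theorem proof.
theorem partialGF_prop (α : Type*) [CommSemiring α] (n : ℕ) (s : Finset ℕ) (hs : ∀ i ∈ s, 0 < i)
    (c : ℕ → Set ℕ) (hc : ∀ i, i ∉ s → 0 ∈ c i) :
    #{p : n.Partition | (∀ j, p.parts.count j ∈ c j) ∧ ∀ j ∈ p.parts, j ∈ s} =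
      coeff n (∏ i ∈ s, indicatorSeries α ((· * i) '' c i)) := by
  simp_rw [coeff_prod, coeff_indicator, prod_boole, sum_boole]
  apply congr_arg
  simp only [mem_univ, forall_true_left, not_and, not_forall, exists_prop,
    Set.mem_image, not_exists]
  set φ : (a : Nat.Partition n) →
    a ∈ filter (fun p ↦ (∀ (j : ℕ), Multiset.count j p.parts ∈ c j) ∧ ∀ j ∈ p.parts, j ∈ s) univ →
    ℕ →₀ ℕ := fun p _ => {
      toFun := fun i => Multiset.count i p.parts • i
      support := Finset.filter (fun i => i ≠ 0) p.parts.toFinset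
      mem_support_toFun := fun a => by
        simp only [smul_eq_mul, ne_eq, mul_eq_zero, Multiset.count_eq_zero]
        rw [not_or, not_not]
        simp only [Multiset.mem_toFinset, not_not, mem_filter] }
  refine Finset.card_bij φ ?_ ?_ ?_
  · intro a ha
    simp only [φ, not_forall, not_exists, not_and, exists_prop, mem_filter]
    rw [mem_finsuppAntidiag]
    dsimp only [ne_eq, smul_eq_mul, id_eq, eq_mpr_eq_cast, le_eq_subset, Finsupp.coe_mk]
    simp only [mem_univ, forall_true_left, not_and, not_forall, exists_prop,
      mem_filter, true_and] at ha
    refine ⟨⟨?_, fun i ↦ ?_⟩, fun i _ ↦ ⟨a.parts.count i, ha.1 i, rfl⟩⟩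
    · conv_rhs => simp [← a.parts_sum]
      rw [sum_multiset_count_of_subset _ s]
      · simp only [smul_eq_mul]
      · intro i
        simp only [Multiset.mem_toFinset, not_not, mem_filter]
        apply ha.2
    · simp only [ne_eq, Multiset.mem_toFinset, not_not, mem_filter, and_imp]
      exact fun hi _ ↦ ha.2 i hi
  · intro p₁ hp₁ p₂ hp₂ h
    apply Nat.Partition.ext
    simp only [true_and, mem_univ, mem_filter] at hp₁ hp₂
    ext i
    simp only [φ, ne_eq, Multiset.mem_toFinset, not_not, smul_eq_mul, Finsupp.mk.injEq] at h
    by_cases hi : i = 0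
    · rw [hi]
      rw [Multiset.count_eq_zero_of_notMem]
      · rw [Multiset.count_eq_zero_of_notMem]
        intro a; exact Nat.lt_irrefl 0 (hs 0 (hp₂.2 0 a))
      intro a; exact Nat.lt_irrefl 0 (hs 0 (hp₁.2 0 a))
    · rw [← mul_left_inj' hi]
      rw [funext_iff] at h
      exact h.2 i
  · simp only [φ, mem_filter, mem_finsuppAntidiag, mem_univ, exists_prop, true_and, and_assoc]
    rintro f ⟨hf, hf₃, hf₄⟩
    have hf' : f ∈ finsuppAntidiag s n := mem_finsuppAntidiag.mpr ⟨hf, hf₃⟩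
    simp only [mem_finsuppAntidiag] at hf'
    refine ⟨⟨∑ i ∈ s, Multiset.replicate (f i / i) i, ?_, ?_⟩, ?_, ?_, ?_⟩
    · intro i hi
      simp only [exists_prop, Multiset.mem_sum, mem_map, Function.Embedding.coeFn_mk] at hi
      rcases hi with ⟨t, ht, z⟩
      apply hs
      rwa [Multiset.eq_of_mem_replicate z]
    · simp_rw [Multiset.sum_sum, Multiset.sum_replicate, Nat.nsmul_eq_mul]
      rw [← hf'.1]
      refine sum_congr rfl fun i hi => Nat.div_mul_cancel ?_
      rcases hf₄ i hi with ⟨w, _, hw₂⟩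
      rw [← hw₂]
      exact dvd_mul_left _ _
    · intro i
      simp_rw [Multiset.count_sum', Multiset.count_replicate, sum_ite_eq']
      split_ifs with h
      · rcases hf₄ i h with ⟨w, hw₁, hw₂⟩
        rwa [← hw₂, Nat.mul_div_cancel _ (hs i h)]
      · exact hc _ h
    · intro i hi
      rw [Multiset.mem_sum] at hi
      rcases hi with ⟨j, hj₁, hj₂⟩
      rwa [Multiset.eq_of_mem_replicate hj₂]
    · ext i
      simp_rw [Multiset.count_sum', Multiset.count_replicate, sum_ite_eq']
      simp only [ne_eq, Multiset.mem_toFinset, not_not, smul_eq_mul, ite_mul,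
        zero_mul, Finsupp.coe_mk]
      split_ifs with h
      · apply Nat.div_mul_cancel
        rcases hf₄ i h with ⟨w, _, hw₂⟩
        apply Dvd.intro_left _ hw₂
      · apply symm
        rw [← Finsupp.notMem_support_iff]
        exact notMem_mono hf'.2 h

theorem partialOddGF_prop [Field α] (n m : ℕ) :
    #{p : n.Partition | ∀ j ∈ p.parts, j ∈ (range m).map mkOdd} = coeff (R := α) n (partialOddGF m) := by
  rw [partialOddGF]
  convert partialGF_prop α n
    ((range m).map mkOdd) _ (fun _ => Set.univ) (fun _ _ => trivial) using 2
  · congr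
    simp only [true_and, forall_const, Set.mem_univ]
  · rw [Finset.prod_map]
    simp_rw [num_series']
    congr! 2 with x
    ext k
    constructor
    · rintro ⟨p, rfl⟩
      refine ⟨p, ⟨⟩, ?_⟩
      apply mul_comm
    rintro ⟨a_w, -, rfl⟩
    apply Dvd.intro_left a_w rfl
  · intro i
    rw [mem_map]
    rintro ⟨a, -, rfl⟩
    exact Nat.succ_pos _

/-- If m is big enough, the partial product's coefficient counts the number of odd partitions -/
theorem oddGF_prop [Field α] (n m : ℕ) (h : n < m * 2) :
    #(Nat.Partition.odds n) = coeff (R := α) n (partialOddGF m) := by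
  rw [← partialOddGF_prop, Nat.Partition.odds, Nat.Partition.restricted]
  congr 2 with p
  simp only [mem_filter, mem_univ, true_and]
  apply forall₂_congr
  intro i hi
  have hin : i ≤ n := by
    simpa [p.parts_sum] using Multiset.single_le_sum (fun _ _ => Nat.zero_le _) _ hi
  simp only [mkOdd, exists_prop, mem_range, Function.Embedding.coeFn_mk, mem_map]
  constructor
  · intro hi₂
    have := Nat.mod_add_div i 2
    rw [Nat.not_even_iff] at hi₂
    rw [hi₂, add_comm] at this
    refine ⟨i / 2, ?_, this⟩
    rw [Nat.div_lt_iff_lt_mul zero_lt_two]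
    exact lt_of_le_of_lt hin h
  · rintro ⟨a, -, rfl⟩
    rw [even_iff_two_dvd]
    apply Nat.two_not_dvd_two_mul_add_one

theorem partialDistinctGF_prop [CommSemiring α] (n m : ℕ) :
    #{p : n.Partition |
        p.parts.Nodup ∧ ∀ j ∈ p.parts, j ∈ (range m).map ⟨Nat.succ, Nat.succ_injective⟩} =
      coeff (R := α) n (partialDistinctGF m) := by
  rw [partialDistinctGF]
  convert partialGF_prop α n
    ((range m).map ⟨Nat.succ, Nat.succ_injective⟩) _ (fun _ => {0, 1}) (fun _ _ => Or.inl rfl)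
    using 2
  · congr! with p
    rw [Multiset.nodup_iff_count_le_one]
    congr! 1 with i
    rcases Multiset.count i p.parts with (_ | _ | ms) <;> simp
  · simp_rw [Finset.prod_map, two_series]
    congr with i
    simp [Set.image_pair]
  · simp only [mem_map, Function.Embedding.coeFn_mk]
    rintro i ⟨_, _, rfl⟩
    apply Nat.succ_pos

/-- If m is big enough, the partial product's coefficient counts the number of distinct partitions
-/
theorem distinctGF_prop [CommSemiring α] (n m : ℕ) (h : n < m + 1) :
    #(Nat.Partition.distincts n) = coeff (R := α) n (partialDistinctGF m) := by
  rw [← partialDistinctGF_prop, Nat.Partition.distincts]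
  congr with p
  apply (and_iff_left _).symm
  intro i hi
  have : i ≤ n := by
    simpa [p.parts_sum] using Multiset.single_le_sum (fun _ _ => Nat.zero_le _) _ hi
  simp only [mkOdd, exists_prop, mem_range, Function.Embedding.coeFn_mk, mem_map]
  refine ⟨i - 1, ?_, Nat.succ_pred_eq_of_pos (p.parts_pos hi)⟩
  rw [tsub_lt_iff_right (Nat.one_le_iff_ne_zero.mpr (p.parts_pos hi).ne')]
  exact lt_of_le_of_lt this h

/-- The key proof idea for the partition theorem, showing that the generating functions for both
sequences are ultimately the same (since the factor converges to 0 as m tends to infinity).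
It's enough to not take the limit though, and just consider large enough `m`.
-/
theorem same_gf [Field α] (m : ℕ) :
    (partialOddGF m * (range m).prod fun i => 1 - (X : PowerSeries α) ^ (m + i + 1)) =
      partialDistinctGF m := by
  rw [partialOddGF, partialDistinctGF]
  induction' m with m ih
  · simp
  set! π₀ : PowerSeries α := ∏ i ∈ range m, (1 - X ^ (m + 1 + i + 1)) with hπ₀
  set! π₁ : PowerSeries α := ∏ i ∈ range m, (1 - X ^ (2 * i + 1))⁻¹ with hπ₁
  set! π₂ : PowerSeries α := ∏ i ∈ range m, (1 - X ^ (m + i + 1)) with hπ₂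
  set! π₃ : PowerSeries α := ∏ i ∈ range m, (1 + X ^ (i + 1)) with hπ₃
  rw [← hπ₃] at ih
  have h : constantCoeff (R := α) (1 - X ^ (2 * m + 1)) ≠ 0 := by
    rw [RingHom.map_sub, RingHom.map_pow, constantCoeff_one, constantCoeff_X,
      zero_pow (2 * m).succ_ne_zero, sub_zero]
    exact one_ne_zero
  calc
    (∏ i ∈ range (m + 1), (1 - X ^ (2 * i + 1))⁻¹) *
          ∏ i ∈ range (m + 1), (1 - X ^ (m + 1 + i + 1)) =
        π₁ * (1 - X ^ (2 * m + 1))⁻¹ * (π₀ * (1 - X ^ (m + 1 + m + 1))) := by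
      rw [prod_range_succ _ m, ← hπ₁, prod_range_succ _ m, ← hπ₀]
    _ = π₁ * (1 - X ^ (2 * m + 1))⁻¹ * (π₀ * ((1 + X ^ (m + 1)) * (1 - X ^ (m + 1)))) := by
      rw [← sq_sub_sq, one_pow, add_assoc _ m 1, ← two_mul (m + 1), pow_mul']
    _ = π₀ * (1 - X ^ (m + 1)) * (1 - X ^ (2 * m + 1))⁻¹ * (π₁ * (1 + X ^ (m + 1))) := by ring
    _ =
        (∏ i ∈ range (m + 1), (1 - X ^ (m + 1 + i))) * (1 - X ^ (2 * m + 1))⁻¹ *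
          (π₁ * (1 + X ^ (m + 1))) := by
      rw [prod_range_succ', add_zero, hπ₀]; simp_rw [← add_assoc]
    _ = π₂ * (1 - X ^ (m + 1 + m)) * (1 - X ^ (2 * m + 1))⁻¹ * (π₁ * (1 + X ^ (m + 1))) := by
      rw [add_right_comm, hπ₂, ← prod_range_succ]; simp_rw [add_right_comm]
    _ = π₂ * (1 - X ^ (2 * m + 1)) * (1 - X ^ (2 * m + 1))⁻¹ * (π₁ * (1 + X ^ (m + 1))) := by
      rw [two_mul, add_right_comm _ m 1]
    _ = (1 - X ^ (2 * m + 1)) * (1 - X ^ (2 * m + 1))⁻¹ * π₂ * (π₁ * (1 + X ^ (m + 1))) := by ring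
    _ = π₂ * (π₁ * (1 + X ^ (m + 1))) := by rw [PowerSeries.mul_inv_cancel _ h, one_mul]
    _ = π₁ * π₂ * (1 + X ^ (m + 1)) := by ring
    _ = π₃ * (1 + X ^ (m + 1)) := by rw [ih]
    _ = _ := by rw [prod_range_succ]

theorem same_coeffs [Field α] (m n : ℕ) (h : n ≤ m) :
    coeff (R := α) n (partialOddGF m) = coeff (R := α) n (partialDistinctGF m) := by
  rw [← same_gf, coeff_mul_prod_one_sub_of_lt_order]
  rintro i -
  rw [order_X_pow]
  exact mod_cast Nat.lt_succ_of_le (le_add_right h)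

theorem partition_theorem (n : ℕ) : #(Nat.Partition.odds n) = #(Nat.Partition.distincts n) := by
  suffices (#(Nat.Partition.odds n) : ℚ) = #(Nat.Partition.distincts n) from
    mod_cast this
  rw [distinctGF_prop n (n + 1) (by linarith)]
  rw [oddGF_prop n (n + 1) (by linarith)]
  apply same_coeffs (n + 1) n n.le_succ

end

end Theorems100


namespace CFG

variable {b k n : ℕ}

theorem card_le_weight {M : Multiset (ℕ × ℕ)} (h : ∀ p ∈ M, 0 < p.1) :
    Multiset.card M ≤ (M.map Prod.fst).sum := by
  have : Multiset.card (M.map Prod.fst) • 1 ≤ (M.map Prod.fst).sum := by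
    apply Multiset.card_nsmul_le_sum
    intro x hx
    obtain ⟨p, hp, rfl⟩ := Multiset.mem_map.mp hx
    exact h p hp
  simpa using this

theorem part_le_weight {M : Multiset (ℕ × ℕ)} (h : ∀ p ∈ M, 0 < p.1) {p : ℕ × ℕ}
    (hp : p ∈ M) : p.1 ≤ (M.map Prod.fst).sum :=
  Multiset.single_le_sum (fun x _ => Nat.zero_le x) _ (Multiset.mem_map_of_mem _ hp)

theorem finite_colored (b n : ℕ) :
    {M : Multiset (ℕ × ℕ) | IsColoredPartition (fun _ => b) n M}.Finite := by
  apply Set.Finite.subset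
    ((n • ((Finset.Icc 1 n ×ˢ Finset.Icc 1 b).val)).powerset.toFinset.finite_toSet)
  intro M hM
  obtain ⟨hcol, hw⟩ := hM
  simp only [Finset.coe_sort_coe, Multiset.mem_toFinset, Multiset.mem_powerset, Finset.mem_coe]
  rw [Multiset.le_iff_count]
  intro p
  by_cases hp : p ∈ M
  · have h1 : p ∈ (Finset.Icc 1 n ×ˢ Finset.Icc 1 b) := by
      obtain ⟨h1, h2, h3⟩ := hcol p hp
      refine Finset.mem_product.mpr ⟨Finset.mem_Icc.mpr ⟨h1, ?_⟩, Finset.mem_Icc.mpr ⟨h2, h3⟩⟩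
      calc p.1 ≤ (M.map Prod.fst).sum := part_le_weight (fun q hq => (hcol q hq).1) hp
        _ = n := hw
    have h2 : Multiset.count p M ≤ n := by
      calc Multiset.count p M ≤ Multiset.card M := Multiset.count_le_card _ _
        _ ≤ (M.map Prod.fst).sum := card_le_weight (fun q hq => (hcol q hq).1)
        _ = n := hw
    rw [Multiset.count_nsmul]
    have : Multiset.count p (Finset.Icc 1 n ×ˢ Finset.Icc 1 b).val = 1 :=
      Multiset.count_eq_one_of_mem (Finset.Icc 1 n ×ˢ Finset.Icc 1 b).nodup h1
    rw [this]
    omega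
  · simp [Multiset.count_eq_zero_of_notMem hp]

theorem finD (b n : ℕ) :
    {M : Multiset (ℕ × ℕ) | IsColoredDistinctPartition (fun _ => b) n M}.Finite :=
  (finite_colored b n).subset fun _ h => h.1

theorem finO (b n : ℕ) :
    {M : Multiset (ℕ × ℕ) | IsColoredOddPartition (fun _ => b) n M}.Finite :=
  (finite_colored b n).subset fun _ h => h.1

end CFG

namespace CFG
variable (b : ℕ)

/-- The multiset of parts of color `c`. -/
def fiber (M : Multiset (ℕ × ℕ)) (c : ℕ) : Multiset ℕ :=
  (M.filter (fun p => p.2 = c)).map Prod.fst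

theorem count_fiber (M : Multiset (ℕ × ℕ)) (j c : ℕ) :
    (fiber M c).count j = M.count (j, c) := by
  rw [fiber, Multiset.count_map, Multiset.filter_filter, Multiset.count,
    Multiset.countP_eq_card_filter]
  congr 1
  apply Multiset.filter_congr
  intro p _
  rw [Prod.ext_iff]
  constructor
  · rintro ⟨h1, h2⟩; exact ⟨h1, h2.symm⟩
  · rintro ⟨h1, h2⟩; exact ⟨h1, h2.symm⟩

theorem mem_fiber {M : Multiset (ℕ × ℕ)} {c x : ℕ} :
    x ∈ fiber M c ↔ (x, c) ∈ M := by
  rw [← Multiset.count_pos, count_fiber, Multiset.count_pos]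

theorem fiber_sum {M : Multiset (ℕ × ℕ)} (hM : ∀ p ∈ M, 1 ≤ p.2 ∧ p.2 ≤ b) :
    ∑ c ∈ Finset.Icc 1 b, M.filter (fun p => p.2 = c) = M := by
  ext p
  rw [Multiset.count_sum']
  simp only [Multiset.count_filter]
  rw [Finset.sum_ite_eq (Finset.Icc 1 b) p.2 (fun _ => M.count p)]
  by_cases hp : p ∈ M
  · rw [if_pos (Finset.mem_Icc.mpr (hM p hp))]
  · simp [Multiset.count_eq_zero_of_notMem hp]

theorem sum_fin_icc {β : Type*} [AddCommMonoid β] (g : ℕ → β) :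
    ∑ c : Fin b, g (c.1 + 1) = ∑ c ∈ Finset.Icc 1 b, g c := by
  rw [Fin.sum_univ_eq_sum_range (fun i => g (i + 1)) b, ← Finset.Ico_add_one_right_eq_Icc,
    Finset.sum_Ico_eq_sum_range]
  simp [Nat.add_comm]

/-- positive multisets -/
abbrev PosM := {s : Multiset ℕ // ∀ x ∈ s, 0 < x}
/-- colored multisets -/
abbrev CM (b : ℕ) := {M : Multiset (ℕ × ℕ) // ∀ p ∈ M, 0 < p.1 ∧ 1 ≤ p.2 ∧ p.2 ≤ b}

/-- Decomposition of a colored multiset into its color fibers. -/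
def Ψ : CM b ≃ (Fin b → PosM) where
  toFun M c := ⟨fiber M.1 (c.1 + 1), by
    intro x hx
    exact (M.2 _ (mem_fiber.mp hx)).1⟩
  invFun f := ⟨∑ c : Fin b, ((f c).1.map (fun j => (j, c.1 + 1))), by
    intro p hp
    rw [Multiset.mem_sum] at hp
    obtain ⟨c, -, hc⟩ := hp
    obtain ⟨j, hj, rfl⟩ := Multiset.mem_map.mp hc
    exact ⟨(f c).2 j hj, le_add_self, Nat.succ_le_of_lt c.2⟩⟩
  left_inv M := by
    apply Subtype.ext
    dsimp only
    have key : ∀ c : ℕ, (fiber M.1 c).map (fun j => (j, c)) = M.1.filter (fun p => p.2 = c) := by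
      intro c
      rw [fiber, Multiset.map_map]
      conv_rhs => rw [← Multiset.map_id (M.1.filter (fun p => p.2 = c))]
      apply Multiset.map_congr rfl
      intro p hp
      have h2 := (Multiset.mem_filter.mp hp).2
      show (p.1, c) = p
      exact Prod.ext rfl h2.symm
    calc ∑ c : Fin b, (fiber M.1 (c.1 + 1)).map (fun j => (j, c.1 + 1))
        = ∑ c : Fin b, M.1.filter (fun p => p.2 = c.1 + 1) := by
          apply Finset.sum_congr rfl; intro c _; exact key (c.1 + 1)
      _ = ∑ c ∈ Finset.Icc 1 b, M.1.filter (fun p => p.2 = c) :=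
          sum_fin_icc b (fun x => M.1.filter (fun p => p.2 = x))
      _ = M.1 := fiber_sum b (fun p hp => ⟨(M.2 p hp).2.1, (M.2 p hp).2.2⟩)
  right_inv f := by
    funext c
    apply Subtype.ext
    dsimp only
    ext j
    rw [count_fiber, Multiset.count_sum']
    have : ∀ c' : Fin b,
        Multiset.count (j, c.1 + 1) ((f c').1.map (fun j' => (j', c'.1 + 1)))
          = if c' = c then Multiset.count j (f c).1 else 0 := by
      intro c'
      rw [Multiset.count_map]
      by_cases h : c' = c
      · subst h
        rw [if_pos rfl]
        rw [Multiset.count, Multiset.countP_eq_card_filter]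
        congr 1
        apply Multiset.filter_congr
        intro x _
        simp [Prod.ext_iff, eq_comm]
      · rw [if_neg h]
        rw [Multiset.card_eq_zero, Multiset.filter_eq_nil]
        intro x _ hx
        apply h
        have := (Prod.ext_iff.mp hx).2
        exact Fin.ext (by omega)
    rw [Finset.sum_congr rfl (fun c' _ => this c')]
    simp

theorem weight_eq_sum_fiber {M : Multiset (ℕ × ℕ)} (hM : ∀ p ∈ M, 1 ≤ p.2 ∧ p.2 ≤ b) :
    (M.map Prod.fst).sum = ∑ c : Fin b, (fiber M (c.1 + 1)).sum := by
  conv_lhs => rw [← fiber_sum b hM]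
  rw [sum_fin_icc b (fun c => (fiber M c).sum)]
  rw [← Finset.sum_congr rfl (fun c _ => rfl : ∀ c ∈ Finset.Icc 1 b, (fiber M c).sum = (fiber M c).sum)]
  induction (Finset.Icc 1 b) using Finset.induction with
  | empty => simp [fiber]
  | insert _ _ h ih =>
    rw [Finset.sum_insert h, Finset.sum_insert h, Multiset.map_add, Multiset.sum_add, ih]
    rfl

theorem nodup_iff_fibers {M : Multiset (ℕ × ℕ)} (hM : ∀ p ∈ M, 1 ≤ p.2 ∧ p.2 ≤ b) :
    M.Nodup ↔ ∀ c : Fin b, (fiber M (c.1 + 1)).Nodup := by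
  simp only [Multiset.nodup_iff_count_le_one]
  constructor
  · intro h c j
    rw [count_fiber]
    exact h _
  · intro h p
    by_cases hp : p ∈ M
    · obtain ⟨h1, h2⟩ := hM p hp
      have : p = (p.1, (⟨p.2 - 1, by omega⟩ : Fin b).1 + 1) := by
        have h3 : p.2 = (⟨p.2 - 1, by omega⟩ : Fin b).1 + 1 := by simp; omega
        exact Prod.ext rfl h3
      rw [this]
      rw [← count_fiber]
      exact h _ _
    · simp [Multiset.count_eq_zero_of_notMem hp]

theorem odd_iff_fibers {M : Multiset (ℕ × ℕ)} (hM : ∀ p ∈ M, 1 ≤ p.2 ∧ p.2 ≤ b) :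
    (∀ p ∈ M, Odd p.1) ↔ ∀ c : Fin b, ∀ x ∈ fiber M (c.1 + 1), Odd x := by
  constructor
  · intro h c x hx
    exact h _ (mem_fiber.mp hx)
  · intro h p hp
    obtain ⟨h1, h2⟩ := hM p hp
    have hmem : p.1 ∈ fiber M ((⟨p.2 - 1, by omega⟩ : Fin b).1 + 1) := by
      rw [mem_fiber]
      have : (p.1, p.2 - 1 + 1) = p := Prod.ext rfl (show p.2 - 1 + 1 = p.2 by omega)
      rwa [this]
    exact h _ _ hmem

end CFG

namespace CFG

/-- distinct positive multisets -/
abbrev DS := {s : Multiset ℕ // (∀ x ∈ s, 0 < x) ∧ s.Nodup}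
/-- odd positive multisets -/
abbrev OS := {s : Multiset ℕ // (∀ x ∈ s, 0 < x) ∧ ∀ x ∈ s, Odd x}

theorem repack {α : Type*} {p q : α → Prop} (e : {x : α // p x} ≃ {x // q x})
    (a : {x // p x}) (h : q (e a).1) : (e.symm ⟨(e a).1, h⟩).1 = a.1 := by
  rw [show (⟨(e a).1, h⟩ : {x // q x}) = e a from Subtype.ext rfl, e.symm_apply_apply]

def eD (m : ℕ) : {s : Multiset ℕ // (∀ x ∈ s, 0 < x) ∧ s.Nodup ∧ s.sum = m}
    ≃ {P : Nat.Partition m // P.parts.Nodup} where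
  toFun s := ⟨⟨s.1, fun hi => s.2.1 _ hi, s.2.2.2⟩, s.2.2.1⟩
  invFun P := ⟨P.1.parts, fun x hx => P.1.parts_pos hx, P.2, P.1.parts_sum⟩
  left_inv s := Subtype.ext rfl
  right_inv P := Subtype.ext (Nat.Partition.ext rfl)

def eO (m : ℕ) : {s : Multiset ℕ // (∀ x ∈ s, 0 < x) ∧ (∀ x ∈ s, Odd x) ∧ s.sum = m}
    ≃ {P : Nat.Partition m // ∀ i ∈ P.parts, ¬Even i} where
  toFun s := ⟨⟨s.1, fun hi => s.2.1 _ hi, s.2.2.2⟩, fun i hi => Nat.not_even_iff_odd.mpr (s.2.2.1 i hi)⟩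
  invFun P := ⟨P.1.parts, fun x hx => P.1.parts_pos hx,
    fun x hx => Nat.not_even_iff_odd.mp (P.2 x hx), P.1.parts_sum⟩
  left_inv s := Subtype.ext rfl
  right_inv P := Subtype.ext (Nat.Partition.ext rfl)

noncomputable def em (m : ℕ) : {s : Multiset ℕ // (∀ x ∈ s, 0 < x) ∧ s.Nodup ∧ s.sum = m}
    ≃ {s : Multiset ℕ // (∀ x ∈ s, 0 < x) ∧ (∀ x ∈ s, Odd x) ∧ s.sum = m} := by
  refine (eD m).trans ((Fintype.equivOfCardEq ?_).trans (eO m).symm)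
  rw [Fintype.card_subtype, Fintype.card_subtype]
  exact ((Theorems100.partition_theorem m).symm : (Nat.Partition.distincts m).card = _)

noncomputable def W (m : ℕ) : {x : DS // x.1.sum = m} ≃ {y : OS // y.1.sum = m} where
  toFun x :=
    let t := em m ⟨x.1.1, x.1.2.1, x.1.2.2, x.2⟩
    ⟨⟨t.1, t.2.1, t.2.2.1⟩, t.2.2.2⟩
  invFun y :=
    let t := (em m).symm ⟨y.1.1, y.1.2.1, y.1.2.2, y.2⟩
    ⟨⟨t.1, t.2.1, t.2.2.1⟩, t.2.2.2⟩
  left_inv x := by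
    apply Subtype.ext; apply Subtype.ext
    exact repack (em m) ⟨x.1.1, x.1.2.1, x.1.2.2, x.2⟩ _
  right_inv y := by
    apply Subtype.ext; apply Subtype.ext
    exact repack (em m).symm ⟨y.1.1, y.1.2.1, y.1.2.2, y.2⟩ _

noncomputable def U : DS ≃ OS :=
  (Equiv.sigmaFiberEquiv (fun s : DS => s.1.sum)).symm.trans
    ((Equiv.sigmaCongrRight W).trans (Equiv.sigmaFiberEquiv (fun t : OS => t.1.sum)))

theorem U_sum (s : DS) : (U s).1.sum = s.1.sum := (W s.1.sum ⟨s, rfl⟩).2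

theorem U_symm_sum (t : OS) : (U.symm t).1.sum = t.1.sum := by
  conv_rhs => rw [← U.apply_symm_apply t]
  rw [U_sum]

end CFG

namespace CFG

def step1 (b n : ℕ) : {M : Multiset (ℕ × ℕ) // IsColoredDistinctPartition (fun _ => b) n M}
    ≃ {x : CM b // x.1.Nodup ∧ (x.1.map Prod.fst).sum = n} where
  toFun M := ⟨⟨M.1, M.2.1.1⟩, M.2.2, M.2.1.2⟩
  invFun x := ⟨x.1.1, ⟨x.1.2, x.2.2⟩, x.2.1⟩
  left_inv M := Subtype.ext rfl
  right_inv x := Subtype.ext (Subtype.ext rfl)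

def step1O (b n : ℕ) : {M : Multiset (ℕ × ℕ) // IsColoredOddPartition (fun _ => b) n M}
    ≃ {x : CM b // (∀ p ∈ x.1, Odd p.1) ∧ (x.1.map Prod.fst).sum = n} where
  toFun M := ⟨⟨M.1, M.2.1.1⟩, M.2.2, M.2.1.2⟩
  invFun x := ⟨x.1.1, ⟨x.1.2, x.2.2⟩, x.2.1⟩
  left_inv M := Subtype.ext rfl
  right_inv x := Subtype.ext (Subtype.ext rfl)

def A1 (b n : ℕ) : {M : Multiset (ℕ × ℕ) // IsColoredDistinctPartition (fun _ => b) n M}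
    ≃ {f : Fin b → PosM // (∀ c, (f c).1.Nodup) ∧ (∑ c : Fin b, (f c).1.sum) = n} :=
  (step1 b n).trans <| Equiv.subtypeEquiv (Ψ b) <| by
    intro x
    have hc : ∀ p ∈ x.1, 1 ≤ p.2 ∧ p.2 ≤ b := fun p hp => ⟨(x.2 p hp).2.1, (x.2 p hp).2.2⟩
    exact and_congr (nodup_iff_fibers b hc) (by rw [weight_eq_sum_fiber b hc]; exact Iff.rfl)

def A2 (b n : ℕ) : {M : Multiset (ℕ × ℕ) // IsColoredOddPartition (fun _ => b) n M}
    ≃ {f : Fin b → PosM // (∀ c, ∀ x ∈ (f c).1, Odd x) ∧ (∑ c : Fin b, (f c).1.sum) = n} :=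
  (step1O b n).trans <| Equiv.subtypeEquiv (Ψ b) <| by
    intro x
    have hc : ∀ p ∈ x.1, 1 ≤ p.2 ∧ p.2 ≤ b := fun p hp => ⟨(x.2 p hp).2.1, (x.2 p hp).2.2⟩
    exact and_congr (odd_iff_fibers b hc) (by rw [weight_eq_sum_fiber b hc]; exact Iff.rfl)

noncomputable def E (b n : ℕ) :
    {f : Fin b → PosM // (∀ c, (f c).1.Nodup) ∧ (∑ c : Fin b, (f c).1.sum) = n}
    ≃ {f : Fin b → PosM // (∀ c, ∀ x ∈ (f c).1, Odd x) ∧ (∑ c : Fin b, (f c).1.sum) = n} where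
  toFun f := ⟨fun c => ⟨(U ⟨(f.1 c).1, (f.1 c).2, f.2.1 c⟩).1,
      (U ⟨(f.1 c).1, (f.1 c).2, f.2.1 c⟩).2.1⟩,
    fun c => (U ⟨(f.1 c).1, (f.1 c).2, f.2.1 c⟩).2.2,
    (Finset.sum_congr rfl fun c _ => U_sum ⟨(f.1 c).1, (f.1 c).2, f.2.1 c⟩).trans f.2.2⟩
  invFun g := ⟨fun c => ⟨(U.symm ⟨(g.1 c).1, (g.1 c).2, g.2.1 c⟩).1,
      (U.symm ⟨(g.1 c).1, (g.1 c).2, g.2.1 c⟩).2.1⟩,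
    fun c => (U.symm ⟨(g.1 c).1, (g.1 c).2, g.2.1 c⟩).2.2,
    (Finset.sum_congr rfl fun c _ => U_symm_sum ⟨(g.1 c).1, (g.1 c).2, g.2.1 c⟩).trans g.2.2⟩
  left_inv f := by
    apply Subtype.ext; funext c; apply Subtype.ext
    exact repack U ⟨(f.1 c).1, (f.1 c).2, f.2.1 c⟩ _
  right_inv g := by
    apply Subtype.ext; funext c; apply Subtype.ext
    exact repack U.symm ⟨(g.1 c).1, (g.1 c).2, g.2.1 c⟩ _

theorem natCard_distinct_eq_odd (b n : ℕ) :
    Nat.card {M : Multiset (ℕ × ℕ) // IsColoredDistinctPartition (fun _ => b) n M}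
      = Nat.card {M : Multiset (ℕ × ℕ) // IsColoredOddPartition (fun _ => b) n M} :=
  Nat.card_congr ((A1 b n).trans ((E b n).trans (A2 b n).symm))

theorem card_DFin_eq_OFin (b n : ℕ) :
    (finD b n).toFinset.card = (finO b n).toFinset.card := by
  rw [← Set.ncard_eq_toFinset_card _ (finD b n), ← Set.ncard_eq_toFinset_card _ (finO b n),
    ← Nat.card_coe_set_eq, ← Nat.card_coe_set_eq]
  exact natCard_distinct_eq_odd b n

end CFG

namespace CFG

theorem msum_le_msum {s t : Multiset ℕ} (h : s ≤ t) : s.sum ≤ t.sum := by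
  obtain ⟨u, rfl⟩ := Multiset.le_iff_exists_add.mp h
  simp

noncomputable def DFin (b n : ℕ) : Finset (Multiset (ℕ × ℕ)) := (finD b n).toFinset
noncomputable def OFin (b n : ℕ) : Finset (Multiset (ℕ × ℕ)) := (finO b n).toFinset

theorem mem_DFin {b n : ℕ} {M : Multiset (ℕ × ℕ)} :
    M ∈ DFin b n ↔ IsColoredDistinctPartition (fun _ => b) n M := by
  rw [DFin, Set.Finite.mem_toFinset]; exact Iff.rfl

theorem mem_OFin {b n : ℕ} {M : Multiset (ℕ × ℕ)} :
    M ∈ OFin b n ↔ IsColoredOddPartition (fun _ => b) n M := by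
  rw [OFin, Set.Finite.mem_toFinset]; exact Iff.rfl

noncomputable def Fc (b k n : ℕ) : ℕ :=
  ∑ M ∈ DFin b n, (Multiset.filter (fun p => p.1 = k) M).card

noncomputable def Gc (b k n : ℕ) : ℕ :=
  ∑ N ∈ OFin b n, (N.toFinset.filter fun p => k ≤ N.count p).card

theorem coloredFDist_eq (b k n : ℕ) : coloredFDist (fun _ => b) k n = Fc b k n :=
  finsum_mem_eq_finite_toFinset_sum _ (finD b n)

theorem coloredGOdd_eq (b k n : ℕ) : coloredGOdd (fun _ => b) k n = Gc b k n :=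
  finsum_mem_eq_finite_toFinset_sum _ (finO b n)

/-- pairs (distinct partition, part of first coord k contained in it) -/
noncomputable def SF (b k n : ℕ) : Finset (Σ _ : Multiset (ℕ × ℕ), ℕ × ℕ) :=
  (DFin b n).sigma fun M => (({k} : Finset ℕ) ×ˢ Finset.Icc 1 b).filter (fun p => p ∈ M)

/-- pairs (distinct partition, part of first coord k NOT contained in it) -/
noncomputable def SFc (b k n : ℕ) : Finset (Σ _ : Multiset (ℕ × ℕ), ℕ × ℕ) :=
  (DFin b n).sigma fun M => (({k} : Finset ℕ) ×ˢ Finset.Icc 1 b).filter (fun p => p ∉ M)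

/-- pairs (odd partition, colored part occurring at least k times) -/
noncomputable def TF (b k n : ℕ) : Finset (Σ _ : Multiset (ℕ × ℕ), ℕ × ℕ) :=
  (OFin b n).sigma fun N => (Finset.Icc 1 n ×ˢ Finset.Icc 1 b).filter (fun p => k ≤ N.count p)

theorem mem_SF {b k n : ℕ} {x : Σ _ : Multiset (ℕ × ℕ), ℕ × ℕ} :
    x ∈ SF b k n ↔ IsColoredDistinctPartition (fun _ => b) n x.1 ∧
      (x.2.1 = k ∧ 1 ≤ x.2.2 ∧ x.2.2 ≤ b) ∧ x.2 ∈ x.1 := by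
  rw [SF, Finset.mem_sigma, Finset.mem_filter, Finset.mem_product, mem_DFin]
  simp only [Finset.mem_singleton, Finset.mem_Icc, Set.mem_setOf_eq]

theorem mem_SFc {b k n : ℕ} {x : Σ _ : Multiset (ℕ × ℕ), ℕ × ℕ} :
    x ∈ SFc b k n ↔ IsColoredDistinctPartition (fun _ => b) n x.1 ∧
      (x.2.1 = k ∧ 1 ≤ x.2.2 ∧ x.2.2 ≤ b) ∧ x.2 ∉ x.1 := by
  rw [SFc, Finset.mem_sigma, Finset.mem_filter, Finset.mem_product, mem_DFin]
  simp only [Finset.mem_singleton, Finset.mem_Icc, Set.mem_setOf_eq]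

theorem mem_TF {b k n : ℕ} {x : Σ _ : Multiset (ℕ × ℕ), ℕ × ℕ} :
    x ∈ TF b k n ↔ IsColoredOddPartition (fun _ => b) n x.1 ∧
      (1 ≤ x.2.1 ∧ x.2.1 ≤ n ∧ 1 ≤ x.2.2 ∧ x.2.2 ≤ b) ∧ k ≤ x.1.count x.2 := by
  rw [TF, Finset.mem_sigma, Finset.mem_filter, Finset.mem_product, mem_OFin]
  simp only [Finset.mem_Icc, Set.mem_setOf_eq]
  tauto

theorem Fc_eq_SF {b k n : ℕ} : Fc b k n = (SF b k n).card := by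
  rw [SF, Finset.card_sigma, Fc]
  apply Finset.sum_congr rfl
  intro M hM
  obtain ⟨⟨hcol, hw⟩, hnd⟩ := mem_DFin.mp hM
  rw [← Multiset.toFinset_card_of_nodup (Multiset.Nodup.filter _ hnd),
    Multiset.toFinset_filter]
  congr 1
  ext p
  simp only [Finset.mem_filter, Finset.mem_product, Finset.mem_singleton, Finset.mem_Icc,
    Multiset.mem_toFinset]
  constructor
  · rintro ⟨hp, h1⟩
    exact ⟨⟨h1, (hcol p hp).2.1, (hcol p hp).2.2⟩, hp⟩
  · rintro ⟨⟨h1, -, -⟩, hp⟩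
    exact ⟨hp, h1⟩

theorem Gc_eq_TF {b k n : ℕ} (hk : 0 < k) : Gc b k n = (TF b k n).card := by
  rw [TF, Finset.card_sigma, Gc]
  apply Finset.sum_congr rfl
  intro N hN
  obtain ⟨⟨hcol, hw⟩, hodd⟩ := mem_OFin.mp hN
  congr 1
  ext p
  simp only [Finset.mem_filter, Finset.mem_product, Finset.mem_Icc, Multiset.mem_toFinset]
  constructor
  · rintro ⟨hp, h1⟩
    refine ⟨⟨⟨(hcol p hp).1, ?_⟩, (hcol p hp).2.1, (hcol p hp).2.2⟩, h1⟩
    calc p.1 ≤ (N.map Prod.fst).sum := part_le_weight (fun q hq => (hcol q hq).1) hp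
      _ = n := hw
  · rintro ⟨-, h1⟩
    exact ⟨Multiset.count_pos.mp (lt_of_lt_of_le hk h1), h1⟩

theorem weight_erase {p : ℕ × ℕ} {M : Multiset (ℕ × ℕ)} (hp : p ∈ M) :
    ((M.erase p).map Prod.fst).sum + p.1 = (M.map Prod.fst).sum := by
  conv_rhs => rw [← Multiset.cons_erase hp]
  rw [Multiset.map_cons, Multiset.sum_cons]
  omega

theorem weight_replicate (k : ℕ) (p : ℕ × ℕ) :
    ((Multiset.replicate k p).map Prod.fst).sum = k * p.1 := by
  rw [Multiset.map_replicate, Multiset.sum_replicate, smul_eq_mul]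

theorem weight_add (S T : Multiset (ℕ × ℕ)) :
    (((S + T)).map Prod.fst).sum = (S.map Prod.fst).sum + (T.map Prod.fst).sum := by
  rw [Multiset.map_add, Multiset.sum_add]

theorem weight_sub {R N : Multiset (ℕ × ℕ)} (h : R ≤ N) :
    ((N - R).map Prod.fst).sum + (R.map Prod.fst).sum = (N.map Prod.fst).sum := by
  rw [← weight_add, tsub_add_cancel_of_le h]

/-- first recursion: `Fc n + Fc (n-k) = b * d (n-k)` for `k ≤ n`. -/
theorem SF_card_bij {b k n : ℕ} (hk : 0 < k) (hkn : k ≤ n) :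
    (SF b k n).card = (SFc b k (n - k)).card := by
  apply Finset.card_bij (fun x _ => (⟨x.1.erase x.2, x.2⟩ : Σ _ : Multiset (ℕ × ℕ), ℕ × ℕ))
  · rintro ⟨M, p⟩ hx
    obtain ⟨⟨⟨hcol, hw⟩, hnd⟩, ⟨hpk, hc1, hc2⟩, hpm⟩ := mem_SF.mp hx
    have hwe := weight_erase hpm
    dsimp only at hcol hw hnd hpk hc1 hc2 hpm hwe
    refine mem_SFc.mpr ⟨⟨⟨fun q hq => hcol q (Multiset.mem_of_mem_erase hq), ?_⟩,
      hnd.erase _⟩, ⟨hpk, hc1, hc2⟩, hnd.notMem_erase⟩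
    dsimp only
    omega
  · rintro ⟨M₁, p₁⟩ h₁ ⟨M₂, p₂⟩ h₂ heq
    obtain ⟨-, -, hpm₁⟩ := mem_SF.mp h₁
    obtain ⟨-, -, hpm₂⟩ := mem_SF.mp h₂
    obtain ⟨he, hp⟩ := Sigma.mk.inj_iff.mp heq
    dsimp only at he hp hpm₁ hpm₂
    have hp' : p₁ = p₂ := heq_iff_eq.mp hp
    subst hp'
    have h1 : M₁ = M₂ := by
      rw [← Multiset.cons_erase hpm₁, ← Multiset.cons_erase hpm₂, he]
    subst h1
    rfl
  · rintro ⟨M', p⟩ hy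
    obtain ⟨⟨⟨hcol, hw⟩, hnd⟩, ⟨hpk, hc1, hc2⟩, hpm⟩ := mem_SFc.mp hy
    dsimp only at hcol hw hnd hpk hc1 hc2 hpm
    refine ⟨⟨p ::ₘ M', p⟩, ?_, ?_⟩
    · apply mem_SF.mpr
      refine ⟨⟨⟨?_, ?_⟩, ?_⟩, ⟨hpk, hc1, hc2⟩, Multiset.mem_cons_self _ _⟩
      · intro q hq
        rcases Multiset.mem_cons.mp hq with h | h
        · subst h; exact ⟨by omega, hc1, hc2⟩
        · exact hcol q h
      · show ((p ::ₘ M').map Prod.fst).sum = n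
        rw [Multiset.map_cons, Multiset.sum_cons, hw]
        omega
      · exact Multiset.nodup_cons.mpr ⟨hpm, hnd⟩
    · show (⟨(p ::ₘ M').erase p, p⟩ : Σ _ : Multiset (ℕ × ℕ), ℕ × ℕ) = ⟨M', p⟩
      rw [Multiset.erase_cons_head]

theorem Fc_rec {b k n : ℕ} (hk : 0 < k) (hkn : k ≤ n) :
    Fc b k n + Fc b k (n - k) = b * (DFin b (n - k)).card := by
  have h1 : (SF b k (n-k)).card + (SFc b k (n-k)).card = b * (DFin b (n-k)).card := by
    rw [SF, SFc, Finset.card_sigma, Finset.card_sigma, ← Finset.sum_add_distrib]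
    rw [Finset.sum_congr rfl (fun M _ =>
      Finset.card_filter_add_card_filter_not (fun p => p ∈ M))]
    simp [Finset.sum_const, mul_comm]
  rw [Fc_eq_SF, Fc_eq_SF, SF_card_bij hk hkn]
  omega

end CFG

namespace CFG

theorem count_mem_of_le {N : Multiset (ℕ × ℕ)} {p : ℕ × ℕ} {k : ℕ} (hk : 0 < k)
    (h : k ≤ N.count p) : p ∈ N :=
  Multiset.count_pos.mp (lt_of_lt_of_le hk h)

theorem TF1_card {b k n : ℕ} (hk : 0 < k) (hkn : k ≤ n) :
    ((TF b k n).filter (fun x => x.2.1 = 1)).card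
      = ((Finset.Icc 1 b) ×ˢ OFin b (n - k)).card := by
  apply Finset.card_bij (fun x _ => (x.2.2, x.1 - Multiset.replicate k x.2))
  · rintro ⟨N, p⟩ hx
    obtain ⟨hx, hp1⟩ := Finset.mem_filter.mp hx
    obtain ⟨⟨⟨hcol, hw⟩, hodd⟩, ⟨hj1, hjn, hc1, hc2⟩, hcount⟩ := mem_TF.mp hx
    dsimp only at hp1 hcol hw hodd hj1 hjn hc1 hc2 hcount ⊢
    have hR : Multiset.replicate k p ≤ N := Multiset.le_count_iff_replicate_le.mp hcount
    have hws := weight_sub hR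
    rw [weight_replicate, hw, hp1] at hws
    refine Finset.mem_product.mpr ⟨Finset.mem_Icc.mpr ⟨hc1, hc2⟩, mem_OFin.mpr ⟨⟨?_, ?_⟩, ?_⟩⟩
    · exact fun q hq => hcol q (Multiset.mem_of_le (Multiset.sub_le_self _ _) hq)
    · dsimp only; omega
    · exact fun q hq => hodd q (Multiset.mem_of_le (Multiset.sub_le_self _ _) hq)
  · rintro ⟨N₁, p₁⟩ h₁ ⟨N₂, p₂⟩ h₂ heq
    obtain ⟨hx₁, hp1₁⟩ := Finset.mem_filter.mp h₁
    obtain ⟨hx₂, hp1₂⟩ := Finset.mem_filter.mp h₂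
    obtain ⟨-, -, hcount₁⟩ := mem_TF.mp hx₁
    obtain ⟨-, -, hcount₂⟩ := mem_TF.mp hx₂
    dsimp only at hp1₁ hp1₂ hcount₁ hcount₂ heq
    obtain ⟨hc, hN⟩ := Prod.mk_inj.mp heq
    have hpp : p₁ = p₂ := Prod.ext (hp1₁.trans hp1₂.symm) hc
    subst hpp
    have hR₁ : Multiset.replicate k p₁ ≤ N₁ := Multiset.le_count_iff_replicate_le.mp hcount₁
    have hR₂ : Multiset.replicate k p₁ ≤ N₂ := Multiset.le_count_iff_replicate_le.mp hcount₂
    have : N₁ = N₂ := by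
      rw [← tsub_add_cancel_of_le hR₁, ← tsub_add_cancel_of_le hR₂, hN]
    subst this
    rfl
  · rintro ⟨c, N'⟩ hy
    obtain ⟨hc, hN'⟩ := Finset.mem_product.mp hy
    obtain ⟨hc1, hc2⟩ := Finset.mem_Icc.mp hc
    obtain ⟨⟨hcol, hw⟩, hodd⟩ := mem_OFin.mp hN'
    refine ⟨⟨N' + Multiset.replicate k (1, c), (1, c)⟩, ?_, ?_⟩
    · apply Finset.mem_filter.mpr
      refine ⟨mem_TF.mpr ⟨⟨⟨?_, ?_⟩, ?_⟩, ⟨le_refl 1, by dsimp only; omega, hc1, hc2⟩, ?_⟩, rfl⟩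
      · intro q hq
        rcases Multiset.mem_add.mp hq with h | h
        · exact hcol q h
        · rw [Multiset.eq_of_mem_replicate h]; exact ⟨one_pos, hc1, hc2⟩
      · rw [weight_add, weight_replicate, hw]; dsimp only; omega
      · intro q hq
        rcases Multiset.mem_add.mp hq with h | h
        · exact hodd q h
        · rw [Multiset.eq_of_mem_replicate h]; exact odd_one
      · dsimp only
        rw [Multiset.count_add, Multiset.count_replicate, if_pos rfl]
        omega
    · dsimp only
      rw [add_tsub_cancel_right]

theorem TF3_card {b k n : ℕ} (hk : 0 < k) (hkn : k ≤ n) :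
    ((TF b k n).filter (fun x => ¬ x.2.1 = 1)).card = (TF b k (n - 2 * k)).card := by
  apply Finset.card_bij (fun x _ =>
    (⟨x.1 - Multiset.replicate k x.2 + Multiset.replicate k (x.2.1 - 2, x.2.2),
      (x.2.1 - 2, x.2.2)⟩ : Σ _ : Multiset (ℕ × ℕ), ℕ × ℕ))
  · rintro ⟨N, p⟩ hx
    obtain ⟨hx, hp1⟩ := Finset.mem_filter.mp hx
    obtain ⟨⟨⟨hcol, hw⟩, hodd⟩, ⟨hj1, hjn, hc1, hc2⟩, hcount⟩ := mem_TF.mp hx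
    dsimp only at hp1 hcol hw hodd hj1 hjn hc1 hc2 hcount ⊢
    have hpN : p ∈ N := count_mem_of_le hk hcount
    obtain ⟨m, hm⟩ := hodd p hpN
    have hp3 : 3 ≤ p.1 := by omega
    have hR : Multiset.replicate k p ≤ N := Multiset.le_count_iff_replicate_le.mp hcount
    have hws := weight_sub hR
    rw [weight_replicate, hw] at hws
    obtain ⟨t, ht⟩ : ∃ t, p.1 = t + 2 := ⟨p.1 - 2, by omega⟩
    have hmul : k * p.1 = k * (p.1 - 2) + 2 * k := by
      rw [ht, show t + 2 - 2 = t from by omega]; ring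
    have hle : p.1 - 2 ≤ k * (p.1 - 2) := Nat.le_mul_of_pos_left _ hk
    refine mem_TF.mpr ⟨⟨⟨?_, ?_⟩, ?_⟩, ⟨by dsimp only; omega, by dsimp only; omega, hc1, hc2⟩, ?_⟩
    · intro q hq
      rcases Multiset.mem_add.mp hq with h | h
      · exact hcol q (Multiset.mem_of_le (Multiset.sub_le_self _ _) h)
      · rw [Multiset.eq_of_mem_replicate h]
        exact ⟨by omega, hc1, hc2⟩
    · rw [weight_add, weight_replicate]
      dsimp only
      omega
    · intro q hq
      rcases Multiset.mem_add.mp hq with h | h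
      · exact hodd q (Multiset.mem_of_le (Multiset.sub_le_self _ _) h)
      · rw [Multiset.eq_of_mem_replicate h]
        exact ⟨m - 1, by omega⟩
    · rw [Multiset.count_add, Multiset.count_replicate, if_pos rfl]
      omega
  · rintro ⟨N₁, p₁⟩ h₁ ⟨N₂, p₂⟩ h₂ heq
    obtain ⟨hx₁, hp1₁⟩ := Finset.mem_filter.mp h₁
    obtain ⟨hx₂, hp1₂⟩ := Finset.mem_filter.mp h₂
    obtain ⟨⟨⟨-, -⟩, hodd₁⟩, ⟨hj1₁, -, -, -⟩, hcount₁⟩ := mem_TF.mp hx₁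
    obtain ⟨⟨⟨-, -⟩, hodd₂⟩, ⟨hj1₂, -, -, -⟩, hcount₂⟩ := mem_TF.mp hx₂
    dsimp only at hp1₁ hp1₂ hj1₁ hj1₂ hcount₁ hcount₂ heq
    obtain ⟨he, hp⟩ := Sigma.mk.inj_iff.mp heq
    have hp' := heq_iff_eq.mp hp
    obtain ⟨he1, he2⟩ := Prod.mk_inj.mp hp'
    have hpp : p₁ = p₂ := Prod.ext (by omega) he2
    subst hpp
    have hR₁ : Multiset.replicate k p₁ ≤ N₁ := Multiset.le_count_iff_replicate_le.mp hcount₁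
    have hR₂ : Multiset.replicate k p₁ ≤ N₂ := Multiset.le_count_iff_replicate_le.mp hcount₂
    have : N₁ = N₂ := by
      have h' := add_right_cancel he
      rw [← tsub_add_cancel_of_le hR₁, ← tsub_add_cancel_of_le hR₂, h']
    subst this
    rfl
  · rintro ⟨N', p'⟩ hy
    obtain ⟨⟨⟨hcol, hw⟩, hodd⟩, ⟨hj1, hjn, hc1, hc2⟩, hcount⟩ := mem_TF.mp hy
    dsimp only at hcol hw hodd hj1 hjn hc1 hc2 hcount
    have hpN : p' ∈ N' := count_mem_of_le hk hcount
    obtain ⟨m, hm⟩ := hodd p' hpN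
    have hR' : Multiset.replicate k p' ≤ N' := Multiset.le_count_iff_replicate_le.mp hcount
    have hws := weight_sub hR'
    rw [weight_replicate, hw] at hws
    have hkj : k ≤ k * p'.1 := by
      calc k = k * 1 := (Nat.mul_one k).symm
        _ ≤ k * p'.1 := Nat.mul_le_mul_left k hj1
    have hmul : k * (p'.1 + 2) = k * p'.1 + 2 * k := by ring
    have hle2 : p'.1 + 2 ≤ k * (p'.1 + 2) := Nat.le_mul_of_pos_left _ hk
    refine ⟨⟨N' - Multiset.replicate k p' + Multiset.replicate k (p'.1 + 2, p'.2),
      (p'.1 + 2, p'.2)⟩, ?_, ?_⟩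
    · apply Finset.mem_filter.mpr
      refine ⟨mem_TF.mpr ⟨⟨⟨?_, ?_⟩, ?_⟩, ⟨by dsimp only; omega, by dsimp only; omega, hc1, hc2⟩, ?_⟩, by dsimp only; omega⟩
      · intro q hq
        rcases Multiset.mem_add.mp hq with h | h
        · exact hcol q (Multiset.mem_of_le (Multiset.sub_le_self _ _) h)
        · rw [Multiset.eq_of_mem_replicate h]
          exact ⟨by omega, hc1, hc2⟩
      · rw [weight_add, weight_replicate]
        dsimp only
        omega
      · intro q hq
        rcases Multiset.mem_add.mp hq with h | h
        · exact hodd q (Multiset.mem_of_le (Multiset.sub_le_self _ _) h)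
        · rw [Multiset.eq_of_mem_replicate h]
          exact ⟨m + 1, by omega⟩
      · rw [Multiset.count_add, Multiset.count_replicate, if_pos rfl]
        omega
    · dsimp only
      have e2 : ((p'.1 + 2 - 2 : ℕ), p'.2) = p' := Prod.ext (by omega) rfl
      rw [add_tsub_cancel_right, e2, tsub_add_cancel_of_le hR']

theorem Gc_rec {b k n : ℕ} (hk : 0 < k) (hkn : k ≤ n) :
    Gc b k n = b * (OFin b (n - k)).card + Gc b k (n - 2 * k) := by
  rw [Gc_eq_TF hk, Gc_eq_TF hk,
    ← Finset.card_filter_add_card_filter_not (fun x => x.2.1 = 1) (s := TF b k n),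
    TF1_card hk hkn, TF3_card hk hkn, Finset.card_product]
  simp

theorem Fc_small {b k n : ℕ} (h : n < k) : Fc b k n = 0 := by
  apply Finset.sum_eq_zero
  intro M hM
  obtain ⟨⟨hcol, hw⟩, -⟩ := mem_DFin.mp hM
  rw [Multiset.card_eq_zero, Multiset.filter_eq_nil]
  intro p hp hpk
  have := part_le_weight (fun q hq => (hcol q hq).1) hp
  omega

theorem Gc_small {b k n : ℕ} (hk : 0 < k) (h : n < k) : Gc b k n = 0 := by
  apply Finset.sum_eq_zero
  intro N hN
  obtain ⟨⟨hcol, hw⟩, -⟩ := mem_OFin.mp hN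
  rw [Finset.card_eq_zero, Finset.filter_eq_empty_iff]
  intro p hp hc
  have hpN := Multiset.mem_toFinset.mp hp
  have hR : Multiset.replicate k p ≤ N := Multiset.le_count_iff_replicate_le.mp hc
  have h1 : ((Multiset.replicate k p).map Prod.fst).sum ≤ (N.map Prod.fst).sum :=
    msum_le_msum (Multiset.map_le_map hR)
  rw [weight_replicate, hw] at h1
  have h2 : 0 < p.1 := (hcol p hpN).1
  have : k ≤ k * p.1 := by
    calc k = k * 1 := (Nat.mul_one k).symm
      _ ≤ k * p.1 := Nat.mul_le_mul_left k h2
  omega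

theorem key (b k : ℕ) (hk : 0 < k) :
    ∀ n, (Fc b k n : ℤ) = (Gc b k n : ℤ) - (Gc b k (n - k) : ℤ) := by
  intro n
  induction n using Nat.strong_induction_on with
  | _ n ih =>
    by_cases h : n < k
    · rw [Fc_small h, Gc_small hk h, Gc_small hk (show n - k < k by omega)]
      simp
    · push_neg at h
      have hrec1 := Fc_rec (b := b) hk h
      have hrec2 := Gc_rec (b := b) hk h
      have hih := ih (n - k) (by omega)
      have hsub : n - k - k = n - 2 * k := by omega
      rw [hsub] at hih
      have c1 := congrArg (fun t : ℕ => (t : ℤ)) hrec1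
      have c2 := congrArg (fun t : ℕ => (t : ℤ)) hrec2
      push_cast at c1 c2
      have c3 : ((DFin b (n - k)).card : ℤ) = ((OFin b (n - k)).card : ℤ) := by
        exact_mod_cast card_DFin_eq_OFin b (n - k)
      have c3' : (b : ℤ) * (DFin b (n - k)).card = (b : ℤ) * (OFin b (n - k)).card := by
        rw [c3]
      linarith [hih]

end CFG


/-- `F^d_k(n) = G°_k(n) - G°_k(n - k)`. -/
theorem coloredFDist_eq_coloredGOdd_sub (b : ℕ) (hb : 0 < b) (n k : ℕ)
    (hn : 0 < n) (hk : 0 < k) :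
    (coloredFDist (fun _ => b) k n : ℤ)
      = (coloredGOdd (fun _ => b) k n : ℤ) - (coloredGOdd (fun _ => b) k (n - k) : ℤ) := by
  rw [CFG.coloredFDist_eq, CFG.coloredGOdd_eq, CFG.coloredGOdd_eq]
  exact CFG.key b k hk n
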